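/- Let S be a field of characteristic 2 with Frobenius endomorphism Φ_S : S → S, s ↦ s², whose image Φ_S(S) = S² is a subfield of S. Let N be an S-vector space, b a symmetric bilinear form on N, and K = {x ∈ N : b(x,x) = 0} (an S-subspace of N). Then dim_S(N/K) ≤ [S : Φ_S(S)], where [S : Φ_S(S)] denotes the dimension of S as a vector space over the subfield Φ_S(S) (an inequality of cardinal-valued ranks in general). -/

import Mathlib

universe u v

/-- Fact 3.1.1 (b): for a symmetric bilinear form `b` on a vector space `N` over a field
`S` of characteristic 2, the codimension of the subspace `K = {x | b(x,x) = 0}` is at most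
the degree `[S : S²]` of `S` over the image of its Frobenius endomorphism. -/
theorem stmt_6 (S : Type u) [Field S] [CharP S 2]
    (σ : S →+* S) (hσ : ∀ a : S, σ a = a ^ 2)
    (N : Type v) [AddCommGroup N] [Module S N]
    (b : LinearMap.BilinForm S N)
    (hsymm : ∀ u v : N, b u v = b v u)
    (K : Submodule S N) (hK : ∀ x : N, x ∈ K ↔ b x x = 0) :
    Cardinal.lift.{u} (Module.rank S (N ⧸ K)) ≤
      Cardinal.lift.{v} (Module.rank σ.fieldRange S) := by
  classical
  -- the quadratic map `q x = b x x` as an additive monoid hom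
  have hq_add : ∀ x y : N, b (x + y) (x + y) = b x x + b y y := by
    intro x y
    have h2 : b x y + b y x = 0 := by
      rw [hsymm x y, CharTwo.add_self_eq_zero]
    simp only [map_add, LinearMap.add_apply]
    calc b x x + b y x + (b x y + b y y)
        = b x x + b y y + (b x y + b y x) := by ring
      _ = b x x + b y y := by rw [h2, add_zero]
  let Q : N →+ S := AddMonoidHom.mk' (fun x => b x x) (by intro x y; exact hq_add x y)
  have hQ_smul : ∀ (s : S) (x : N), Q (s • x) = σ s * Q x := by
    intro s x
    simp only [Q, AddMonoidHom.mk'_apply, map_smul, LinearMap.smul_apply, smul_eq_mul, hσ]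
    ring
  -- a basis of the quotient
  let c := Module.Basis.ofVectorSpace S (N ⧸ K)
  -- lift each basis vector to N
  have hsurj : Function.Surjective (K.mkQ) := Submodule.mkQ_surjective K
  choose x hx using fun i => hsurj (c i)
  -- the family in S
  set F := σ.fieldRange
  let v : Module.Basis.ofVectorSpaceIndex S (N ⧸ K) → S := fun i => Q (x i)
  have hli : LinearIndependent F v := by
    rw [linearIndependent_iff']
    intro s g hg i hi
    -- pick preimages of the coefficients under σ
    choose t ht using fun j => (g j).2
    have hsum : Q (∑ j ∈ s, t j • x j) = 0 := by
      rw [map_sum]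
      have : ∀ j ∈ s, Q (t j • x j) = g j • v j := by
        intro j hj
        rw [hQ_smul, ht j]
        rfl
      rw [Finset.sum_congr rfl this, hg]
    have hmem : (∑ j ∈ s, t j • x j) ∈ K := (hK _).2 hsum
    have hquot : (∑ j ∈ s, t j • (c j : N ⧸ K)) = 0 := by
      have := (Submodule.Quotient.mk_eq_zero K).2 hmem
      rw [← this]
      rw [show Submodule.Quotient.mk (∑ j ∈ s, t j • x j) = K.mkQ (∑ j ∈ s, t j • x j) from rfl,
        map_sum]
      refine Finset.sum_congr rfl fun j hj => ?_
      rw [map_smul, hx j]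
    have hti : t i = 0 := by
      have hlic := c.linearIndependent
      rw [linearIndependent_iff'] at hlic
      exact hlic s t hquot i hi
    have : (g i : S) = 0 := by rw [← ht i, hti, map_zero]
    exact Subtype.ext this
  have hcard := hli.cardinal_lift_le_rank
  have hrank : Module.rank S (N ⧸ K) = Cardinal.mk (Module.Basis.ofVectorSpaceIndex S (N ⧸ K)) :=
    (Module.Basis.mk_eq_rank'' c).symm
  rw [hrank]
  exact hcard
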